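/- Let n ≥ 1 and let x ∈ ℝ^n. Then max over all nonempty subsets A ⊆ {1,…,n} of (1/|A|)·(∑_{i∈A} |x_i|)² is at least (1/(1+ln n))·∑_{i=1}^n x_i². Equivalently, there exists a nonempty subset A ⊆ {1,…,n} such that (∑_{i∈A} |x_i|)² ≥ (|A|/(1+ln n))·‖x‖₂². -/

import Mathlib

open Finset

/-- Harmonic sum bound over `Icc 1 n`. -/
lemma aux_harmonic_bound (n : ℕ) : ∑ k ∈ Finset.Icc 1 n, (1 : ℝ) / k ≤ 1 + Real.log n := by
  have h1 : ((harmonic n : ℚ) : ℝ) ≤ 1 + Real.log n := harmonic_le_one_add_log n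
  have h2 : ((harmonic n : ℚ) : ℝ) = ∑ k ∈ Finset.Icc 1 n, (1 : ℝ) / k := by
    rw [harmonic_eq_sum_Icc]
    push_cast
    simp [one_div]
  linarith

/-- For any `x ∈ ℝⁿ` (n ≥ 1), there exists a nonempty subset `A ⊆ {1,…,n}` such that
`(∑_{i∈A} |x_i|)² ≥ (|A|/(1+ln n)) · ∑_i x_i²`. -/
theorem norm_one_sq_subset_ge_log_norm_two_sq (n : ℕ) (hn : 1 ≤ n) (x : Fin n → ℝ) :
    ∃ A : Finset (Fin n), A.Nonempty ∧
      (∑ i ∈ A, |x i|) ^ 2 ≥ (A.card : ℝ) / (1 + Real.log n) * ∑ i, (x i) ^ 2 := by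
  have hlog : (0 : ℝ) < 1 + Real.log n := by
    have : (0:ℝ) ≤ Real.log n := Real.log_nonneg (by exact_mod_cast hn)
    linarith
  -- the family of nonempty subsets
  set 𝒜 : Finset (Finset (Fin n)) := Finset.univ.powerset.filter (fun A => A.Nonempty) with h𝒜
  have huniv_ne : (Finset.univ : Finset (Fin n)).Nonempty := by
    exact ⟨⟨0, hn⟩, mem_univ _⟩
  have h𝒜ne : 𝒜.Nonempty := ⟨Finset.univ, by simp [h𝒜, huniv_ne]⟩
  set f : Finset (Fin n) → ℝ := fun A => (∑ i ∈ A, |x i|) ^ 2 / A.card with hf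
  obtain ⟨A₀, hA₀mem, hA₀max⟩ := 𝒜.exists_max_image f h𝒜ne
  have hA₀ne : A₀.Nonempty := (Finset.mem_filter.mp hA₀mem).2
  set M : ℝ := f A₀ with hM
  -- rank sets
  set B : Fin n → Finset (Fin n) := fun i =>
    Finset.univ.filter (fun j => |x i| < |x j| ∨ (|x j| = |x i| ∧ j ≤ i)) with hB
  have hmemB : ∀ i, i ∈ B i := fun i => by simp [hB]
  have hBne : ∀ i, (B i).Nonempty := fun i => ⟨i, hmemB i⟩
  have hBcardpos : ∀ i, 0 < (B i).card := fun i => Finset.card_pos.mpr (hBne i)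
  -- strict monotonicity of cards along the order
  have hlt : ∀ i j : Fin n, (|x j| < |x i| ∨ (|x i| = |x j| ∧ i < j)) →
      (B i).card < (B j).card := by
    intro i j hij
    apply Finset.card_lt_card
    constructor
    · intro k hk
      simp only [hB, Finset.mem_filter, Finset.mem_univ, true_and] at hk ⊢
      rcases hk with hk | ⟨hk1, hk2⟩
      · rcases hij with h | ⟨h, _⟩
        · left; linarith
        · left; linarith
      · rcases hij with h | ⟨h, hij2⟩
        · left; linarith
        · right; exact ⟨by linarith, le_trans hk2 (le_of_lt hij2)⟩
    · intro hsub
      have := hsub (hmemB j)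
      simp only [hB, Finset.mem_filter, Finset.mem_univ, true_and] at this
      rcases this with h | ⟨h1, h2⟩
      · rcases hij with h' | ⟨h', _⟩ <;> linarith
      · rcases hij with h' | ⟨h', hij2⟩
        · linarith
        · exact absurd h2 (not_le.mpr hij2)
  have hinj : Function.Injective (fun i => (B i).card) := by
    intro i j hcard
    by_contra hne
    rcases lt_trichotomy (|x i|) (|x j|) with h | h | h
    · exact absurd hcard (ne_of_gt (hlt j i (Or.inl h)))
    · rcases lt_or_gt_of_ne (fun h' => hne h') with hij | hij
      · exact absurd hcard (ne_of_lt (hlt i j (Or.inr ⟨h, hij⟩)))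
      · exact absurd hcard (ne_of_gt (hlt j i (Or.inr ⟨h.symm, hij⟩)))
    · exact absurd hcard (ne_of_lt (hlt i j (Or.inl h)))
  -- the image of the ranks is exactly Icc 1 n
  have himg : (Finset.univ.image fun i => (B i).card) = Finset.Icc 1 n := by
    apply Finset.eq_of_subset_of_card_le
    · intro k hk
      simp only [Finset.mem_image, Finset.mem_univ, true_and] at hk
      obtain ⟨i, hi⟩ := hk
      rw [Finset.mem_Icc]
      constructor
      · rw [← hi]; exact hBcardpos i
      · rw [← hi]
        calc (B i).card ≤ (Finset.univ : Finset (Fin n)).card := Finset.card_le_univ _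
          _ = n := by simp
    · rw [Nat.card_Icc]
      rw [Finset.card_image_of_injective _ hinj]
      simp
  -- M is the max
  have hMmax : ∀ i, f (B i) ≤ M := by
    intro i
    apply hA₀max
    simp [h𝒜, hBne i]
  -- key pointwise bound: x i ^ 2 ≤ M / (B i).card
  have hkey : ∀ i, x i ^ 2 ≤ M * (1 / (B i).card) := by
    intro i
    have hc : (0:ℝ) < (B i).card := by exact_mod_cast hBcardpos i
    have hS : |x i| * (B i).card ≤ ∑ j ∈ B i, |x j| := by
      calc |x i| * (B i).card = ∑ _j ∈ B i, |x i| := by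
            rw [Finset.sum_const, nsmul_eq_mul, mul_comm]
        _ ≤ ∑ j ∈ B i, |x j| := by
            apply Finset.sum_le_sum
            intro j hj
            simp only [hB, Finset.mem_filter, Finset.mem_univ, true_and] at hj
            rcases hj with h | ⟨h, _⟩
            · linarith
            · linarith
    have hxle : |x i| ≤ (∑ j ∈ B i, |x j|) / (B i).card := by
      rw [le_div_iff₀ hc]; exact hS
    have hx2 : x i ^ 2 ≤ ((∑ j ∈ B i, |x j|) / (B i).card) ^ 2 := by
      rw [← sq_abs (x i)]
      exact pow_le_pow_left₀ (abs_nonneg _) hxle 2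
    have heq : ((∑ j ∈ B i, |x j|) / (B i).card) ^ 2 = f (B i) * (1 / (B i).card) := by
      simp only [hf]
      rw [div_pow]
      ring
    calc x i ^ 2 ≤ f (B i) * (1 / (B i).card) := by rw [← heq]; exact hx2
      _ ≤ M * (1 / (B i).card) := by
          apply mul_le_mul_of_nonneg_right (hMmax i)
          positivity
  -- sum up
  have hMnonneg : 0 ≤ M := by
    have hc : (0:ℝ) ≤ (A₀.card : ℝ) := by positivity
    have : (0:ℝ) ≤ (∑ i ∈ A₀, |x i|) ^ 2 := sq_nonneg _
    positivity
  have hsum : ∑ i, x i ^ 2 ≤ M * (1 + Real.log n) := by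
    calc ∑ i, x i ^ 2 ≤ ∑ i, M * (1 / ((B i).card : ℝ)) := Finset.sum_le_sum fun i _ => hkey i
      _ = M * ∑ i, (1 / ((B i).card : ℝ)) := by rw [Finset.mul_sum]
      _ = M * ∑ k ∈ Finset.Icc 1 n, (1 : ℝ) / k := by
          congr 1
          rw [← himg, Finset.sum_image (fun a _ b _ h => hinj h)]
      _ ≤ M * (1 + Real.log n) := mul_le_mul_of_nonneg_left (aux_harmonic_bound n) hMnonneg
  refine ⟨A₀, hA₀ne, ?_⟩
  have hcardpos : (0:ℝ) < (A₀.card : ℝ) := by exact_mod_cast Finset.card_pos.mpr hA₀ne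
  have hM' : (∑ i ∈ A₀, |x i|) ^ 2 = M * A₀.card := by
    rw [hM, hf]; field_simp
  rw [ge_iff_le, hM', div_mul_eq_mul_div, div_le_iff₀ hlog]
  have : (A₀.card : ℝ) * ∑ i, x i ^ 2 ≤ (A₀.card : ℝ) * (M * (1 + Real.log n)) :=
    mul_le_mul_of_nonneg_left hsum (le_of_lt hcardpos)
  linarith [this]
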